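/- Let Q and Q' be probability measures on Θ, g : Θ × α → Fin k a measurable classifier, x ∈ α and y ∈ Fin k. If Q'{θ : g(θ,x) = y} ≥ Q'{θ : g(θ,x) = i} for every i ∈ Fin k (the label y is a Q'-majority prediction at x), then Q'{θ : g(θ,x) ≠ y} ≤ ∫_Θ ∫_Θ 1[g(θ,x) ≠ g(θ',x)] dQ'(θ') dQ(θ). (Pointwise majority-vote inequality in the proof of Lemma 2.) -/

import Mathlib

open MeasureTheory

/-- Pointwise majority-vote inequality in the proof of Lemma 2: if `y` is a
`Q'`-majority prediction at `x`, then
`Q'{θ : g(θ,x) ≠ y} ≤ ∫_Θ ∫_Θ 1[g(θ,x) ≠ g(θ',x)] dQ'(θ') dQ(θ)`. -/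
theorem majority_vote_pointwise_inequality
    {α Θ : Type*} [MeasurableSpace α] [MeasurableSpace Θ]
    {k : ℕ} (hk : 2 ≤ k)
    (Q Q' : Measure Θ) [IsProbabilityMeasure Q] [IsProbabilityMeasure Q']
    (g : Θ × α → Fin k) (hg : Measurable g)
    (x : α) (y : Fin k)
    (hmaj : ∀ i : Fin k, Q' {θ | g (θ, x) = i} ≤ Q' {θ | g (θ, x) = y}) :
    (Q' {θ | g (θ, x) ≠ y}).toReal ≤
      ∫ θ, ∫ θ', (if g (θ, x) ≠ g (θ', x) then (1 : ℝ) else 0) ∂Q' ∂Q := by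
  set f : Θ → Fin k := fun θ => g (θ, x) with hfdef
  have hf : Measurable f := hg.comp (measurable_id.prodMk measurable_const)
  have hS : ∀ c : Fin k, MeasurableSet {θ | f θ = c} := fun c =>
    hf (measurableSet_singleton c)
  -- inner integral computation
  have hinner : ∀ θ : Θ,
      ∫ θ', (if g (θ, x) ≠ g (θ', x) then (1 : ℝ) else 0) ∂Q'
        = (Q' {θ' | f θ' ≠ f θ}).toReal := by
    intro θ
    have hset : MeasurableSet {θ' | f θ' ≠ f θ} := (hS (f θ)).compl
    have : ∀ θ' : Θ, (if g (θ, x) ≠ g (θ', x) then (1 : ℝ) else 0)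
        = Set.indicator {θ' | f θ' ≠ f θ} (fun _ => (1 : ℝ)) θ' := by
      intro θ'
      simp only [Set.indicator_apply, Set.mem_setOf_eq, hfdef, ne_comm]
    simp_rw [this]
    rw [integral_indicator_const (1 : ℝ) hset, smul_eq_mul, mul_one, measureReal_def]
  -- pointwise bound
  have hbound : ∀ θ : Θ,
      (Q' {θ | f θ ≠ y}).toReal ≤ (Q' {θ' | f θ' ≠ f θ}).toReal := by
    intro θ
    have h1 : Q' {θ | f θ ≠ y} = 1 - Q' {θ | f θ = y} := by
      rw [← prob_compl_eq_one_sub (hS y)]; rfl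
    have h2 : Q' {θ' | f θ' ≠ f θ} = 1 - Q' {θ' | f θ' = f θ} := by
      rw [← prob_compl_eq_one_sub (hS (f θ))]; rfl
    rw [h1, h2]
    exact ENNReal.toReal_mono (by finiteness) (tsub_le_tsub_left (hmaj (f θ)) 1)
  -- integrability of the inner integral as a function of θ
  have hmeas : Measurable fun θ => (Q' {θ' | f θ' ≠ f θ}).toReal := by
    have : (fun θ => (Q' {θ' | f θ' ≠ f θ}).toReal)
        = (fun c : Fin k => (Q' {θ' | f θ' ≠ c}).toReal) ∘ f := rfl
    rw [this]
    exact (measurable_of_countable _).comp hf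
  have hint : Integrable (fun θ => (Q' {θ' | f θ' ≠ f θ}).toReal) Q := by
    refine (integrable_const (1 : ℝ)).mono' hmeas.aestronglyMeasurable ?_
    filter_upwards with θ
    rw [Real.norm_eq_abs, abs_of_nonneg ENNReal.toReal_nonneg]
    exact ENNReal.toReal_mono ENNReal.one_ne_top prob_le_one
  calc (Q' {θ | g (θ, x) ≠ y}).toReal
      = ∫ _θ, (Q' {θ | f θ ≠ y}).toReal ∂Q := by
        rw [integral_const, measureReal_def, measure_univ, ENNReal.toReal_one, one_smul]
    _ ≤ ∫ θ, (Q' {θ' | f θ' ≠ f θ}).toReal ∂Q :=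
        integral_mono (integrable_const _) hint hbound
    _ = ∫ θ, ∫ θ', (if g (θ, x) ≠ g (θ', x) then (1 : ℝ) else 0) ∂Q' ∂Q := by
        exact integral_congr_ae (Filter.Eventually.of_forall fun θ => (hinner θ).symm)
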